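/- For positive definite symmetric matrices A, B in R^{n×n} and t ∈ [0,1], log det((1-t)A + tB) ≥ (1-t) log det A + t log det B + (1/2) t(1-t) ‖A - B‖_HS² / max{λ_A², λ_B²}, where λ_A, λ_B are the maximal eigenvalues of A, B and ‖·‖_HS is the Hilbert–Schmidt (Frobenius) norm. -/

import Mathlib

open Matrix Real Finset

set_option maxHeartbeats 4000000

namespace SLD

variable {n : ℕ}

abbrev Mat (n : ℕ) := Matrix (Fin n) (Fin n) ℝ

/-- scalar inequality -/
lemma scalar_ineq {μ : ℝ} (hμ : 0 < μ) :
    (1-μ)^2 / (4*(1+μ)*max 1 μ) ≤ Real.log ((1+μ)/2) - 1/2 * Real.log μ := by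
  obtain ⟨r, hr0, rfl⟩ : ∃ r, 0 < r ∧ r^2 = μ :=
    ⟨Real.sqrt μ, Real.sqrt_pos.2 hμ, Real.sq_sqrt hμ.le⟩
  have h1μ : 0 < 1 + r^2 := by positivity
  have hlog : Real.log ((1+r^2)/2) - 1/2 * Real.log (r^2) = Real.log ((1+r^2)/(2*r)) := by
    rw [Real.log_pow, Real.log_div (ne_of_gt h1μ) (by norm_num),
        Real.log_div (ne_of_gt h1μ) (by positivity), Real.log_mul (by norm_num) (ne_of_gt hr0)]
    push_cast
    ring
  rw [hlog]
  have hbound : 1 - (2*r)/(1+r^2) ≤ Real.log ((1+r^2)/(2*r)) := by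
    have h := Real.log_le_sub_one_of_pos (show (0:ℝ) < ((1+r^2)/(2*r))⁻¹ by positivity)
    rw [Real.log_inv, inv_div] at h
    linarith
  refine le_trans ?_ hbound
  have he : 1 - (2*r)/(1+r^2) = (1-r)^2/(1+r^2) := by
    field_simp
    ring
  rw [he, div_le_div_iff₀ (by positivity) h1μ]
  rcases le_total (r^2) 1 with hc | hc
  · rw [max_eq_left hc]
    have hr1 : r ≤ 1 := by nlinarith
    nlinarith [mul_nonneg (mul_nonneg (sq_nonneg (1-r)) h1μ.le)
      (show (0:ℝ) ≤ 4 - (1+r)^2 by nlinarith)]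
  · rw [max_eq_right hc]
    have hr1 : 1 ≤ r := by nlinarith
    nlinarith [mul_nonneg (mul_nonneg (sq_nonneg (1-r)) h1μ.le)
      (show (0:ℝ) ≤ 4*r^2 - (1+r)^2 by nlinarith)]

lemma amgm {x y u v : ℝ} (hu : 0 < u) (hv : 0 < v) :
    x*y ≤ (x^2*(v/u) + y^2*(u/v))/2 := by
  have h2 : (x^2*(v/u) + y^2*(u/v))/2 = (x^2*v^2 + y^2*u^2)/(2*(u*v)) := by
    field_simp
  rw [h2, le_div_iff₀ (by positivity)]
  nlinarith [sq_nonneg (x*v - y*u)]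

lemma psd_smul {M : Mat n} (hM : M.PosSemidef) {c : ℝ} (hc : 0 ≤ c) :
    (c • M).PosSemidef := by
  refine Matrix.PosSemidef.of_dotProduct_mulVec_nonneg ?_ fun x => ?_
  · unfold Matrix.IsHermitian
    rw [Matrix.conjTranspose_smul, hM.1.eq]
    simp
  · rw [Matrix.smul_mulVec, dotProduct_smul, smul_eq_mul]
    exact mul_nonneg hc (hM.dotProduct_mulVec_nonneg x)

lemma posdef_smul {M : Mat n} (hM : M.PosDef) {c : ℝ} (hc : 0 < c) :
    (c • M).PosDef := by
  refine Matrix.PosDef.of_dotProduct_mulVec_pos ?_ fun x hx => ?_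
  · unfold Matrix.IsHermitian
    rw [Matrix.conjTranspose_smul, hM.1.eq]
    simp
  · rw [Matrix.smul_mulVec, dotProduct_smul, smul_eq_mul]
    exact mul_pos hc (hM.dotProduct_mulVec_pos hx)

lemma psd_diag {M : Mat n} (hM : M.PosSemidef) (i : Fin n) : 0 ≤ M i i := by
  have h := hM.dotProduct_mulVec_nonneg (Pi.single i 1)
  have e : star (Pi.single i 1 : Fin n → ℝ) ⬝ᵥ (M *ᵥ Pi.single i 1) = M i i := by
    simp [Matrix.mulVec_single, single_dotProduct]
  rwa [e] at h

lemma diag_le {M : Mat n} {l : ℝ} (h : (l • (1 : Mat n) - M).PosSemidef) (i : Fin n) :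
    M i i ≤ l := by
  have h2 := psd_diag h i
  simp only [Matrix.sub_apply, Matrix.smul_apply, Matrix.one_apply_eq, smul_eq_mul,
    mul_one] at h2
  linarith

lemma quad_expand (P : Mat n) (u : Fin n → ℝ) {l : ℝ} :
    star u ⬝ᵥ ((l • (1 : Mat n) - P) *ᵥ u) = l * (u ⬝ᵥ u) - u ⬝ᵥ (P *ᵥ u) := by
  rw [Matrix.sub_mulVec, Matrix.smul_mulVec, Matrix.one_mulVec,
    dotProduct_sub, dotProduct_smul]
  simp

lemma transfer {Y : Mat n} {l : ℝ} (hl : 0 ≤ l)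
    (h : (l • (1 : Mat n) - Y * Yᵀ).PosSemidef) :
    (l • (1 : Mat n) - Yᵀ * Y).PosSemidef := by
  have key : ∀ u : Fin n → ℝ, (Yᵀ *ᵥ u) ⬝ᵥ (Yᵀ *ᵥ u) ≤ l * (u ⬝ᵥ u) := by
    intro u
    have h2 := h.dotProduct_mulVec_nonneg u
    rw [quad_expand] at h2
    have e : u ⬝ᵥ ((Y * Yᵀ) *ᵥ u) = (Yᵀ *ᵥ u) ⬝ᵥ (Yᵀ *ᵥ u) := by
      rw [← Matrix.mulVec_mulVec, Matrix.dotProduct_mulVec, ← Matrix.mulVec_transpose]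
    rw [e] at h2
    linarith
  have herm : (l • (1 : Mat n) - Yᵀ * Y).IsHermitian := by
    unfold Matrix.IsHermitian
    simp only [Matrix.conjTranspose_eq_transpose_of_trivial, Matrix.transpose_sub,
      Matrix.transpose_smul, Matrix.transpose_one, Matrix.transpose_mul,
      Matrix.transpose_transpose]
  refine Matrix.PosSemidef.of_dotProduct_mulVec_nonneg herm fun v => ?_
  rw [quad_expand]
  have e : v ⬝ᵥ ((Yᵀ * Y) *ᵥ v) = (Y *ᵥ v) ⬝ᵥ (Y *ᵥ v) := by
    rw [← Matrix.mulVec_mulVec, Matrix.dotProduct_mulVec, ← Matrix.mulVec_transpose,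
      Matrix.transpose_transpose]
  rw [e]
  set q : ℝ := (Y *ᵥ v) ⬝ᵥ (Y *ᵥ v) with hq
  have hq0 : 0 ≤ q := Finset.sum_nonneg fun i _ => mul_self_nonneg _
  have hv0 : (0:ℝ) ≤ v ⬝ᵥ v := Finset.sum_nonneg fun i _ => mul_self_nonneg _
  have hcs : q^2 ≤ (v ⬝ᵥ v) * (l * q) := by
    have e2 : q = v ⬝ᵥ (Yᵀ *ᵥ (Y *ᵥ v)) := by
      rw [Matrix.dotProduct_mulVec, ← Matrix.mulVec_transpose, Matrix.transpose_transpose]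
    have hcs0 : (v ⬝ᵥ (Yᵀ *ᵥ (Y *ᵥ v)))^2
        ≤ (v ⬝ᵥ v) * ((Yᵀ *ᵥ (Y *ᵥ v)) ⬝ᵥ (Yᵀ *ᵥ (Y *ᵥ v))) := by
      have := Finset.sum_mul_sq_le_sq_mul_sq Finset.univ v (Yᵀ *ᵥ (Y *ᵥ v))
      simpa [dotProduct, pow_two, Finset.mul_sum] using this
    calc q^2 = (v ⬝ᵥ (Yᵀ *ᵥ (Y *ᵥ v)))^2 := by rw [← e2]
    _ ≤ (v ⬝ᵥ v) * ((Yᵀ *ᵥ (Y *ᵥ v)) ⬝ᵥ (Yᵀ *ᵥ (Y *ᵥ v))) := hcs0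
    _ ≤ (v ⬝ᵥ v) * (l * q) := by
        exact mul_le_mul_of_nonneg_left (key (Y *ᵥ v)) hv0
  rcases eq_or_lt_of_le hq0 with h0 | h0
  · nlinarith
  · nlinarith [hcs, h0, hv0]

lemma eig_bound {M : Mat n} (hM : M.IsHermitian) {l : ℝ} (h : ∀ i, hM.eigenvalues i ≤ l) :
    (l • (1 : Mat n) - M).PosSemidef := by
  set V : Mat n := (hM.eigenvectorUnitary : Mat n) with hV
  have hspec : M = V * diagonal hM.eigenvalues * Vᵀ := by
    have := hM.spectral_theorem
    simpa [Matrix.star_eq_conjTranspose, Matrix.conjTranspose_eq_transpose_of_trivial,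
      Function.comp] using this
  have hVVt : V * Vᵀ = 1 := by
    have := (Matrix.mem_unitaryGroup_iff).mp hM.eigenvectorUnitary.2
    simpa [Matrix.star_eq_conjTranspose, Matrix.conjTranspose_eq_transpose_of_trivial] using this
  have h1 : l • (1 : Mat n) - M = V * (diagonal (fun i => l - hM.eigenvalues i)) * Vᵀ := by
    have hd : diagonal (fun i => l - hM.eigenvalues i)
        = l • (1 : Mat n) - diagonal hM.eigenvalues := by
      ext i j
      rcases eq_or_ne i j with rfl | hij
      · simp
      · simp [Matrix.diagonal_apply_ne _ hij, Matrix.one_apply_ne hij]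
    rw [hd, Matrix.mul_sub, Matrix.sub_mul]
    have hV1 : V * (l • (1 : Mat n)) * Vᵀ = l • (1 : Mat n) := by
      rw [Matrix.mul_smul, Matrix.mul_one, Matrix.smul_mul, hVVt]
    rw [hV1, ← hspec]
  rw [h1]
  have hdpsd : (diagonal (fun i => l - hM.eigenvalues i)).PosSemidef :=
    Matrix.PosSemidef.diagonal (fun i => sub_nonneg.2 (h i))
  have := hdpsd.mul_mul_conjTranspose_same V
  simpa [Matrix.star_eq_conjTranspose, Matrix.conjTranspose_eq_transpose_of_trivial] using this

lemma posdef_conj {N Q : Mat n} (hN : N.PosDef) (hQ : IsUnit Q.det) (hQs : Qᵀ = Q) :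
    (Q * N * Q).PosDef := by
  have hQu : IsUnit Q := (Matrix.isUnit_iff_isUnit_det Q).2 hQ
  have hQh : Qᴴ = Q := by
    rw [Matrix.conjTranspose_eq_transpose_of_trivial, hQs]
  refine Matrix.PosDef.of_dotProduct_mulVec_pos ?_ fun x hx => ?_
  · unfold Matrix.IsHermitian
    rw [Matrix.conjTranspose_mul, Matrix.conjTranspose_mul, hQh, hN.1.eq, Matrix.mul_assoc]
  · have hinj : Function.Injective (Q.mulVec) := (Matrix.mulVec_injective_iff_isUnit).2 hQu
    have hQx : Q *ᵥ x ≠ 0 := by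
      intro h0
      apply hx
      apply hinj
      simpa [Matrix.mulVec_zero] using h0
    have hpos := hN.dotProduct_mulVec_pos hQx
    have e : star x ⬝ᵥ ((Q * N * Q) *ᵥ x) = star (Q *ᵥ x) ⬝ᵥ (N *ᵥ (Q *ᵥ x)) := by
      simp only [star_trivial]
      rw [← Matrix.mulVec_mulVec, ← Matrix.mulVec_mulVec, Matrix.dotProduct_mulVec,
        ← Matrix.mulVec_transpose, hQs]
    rw [e]
    exact hpos

lemma posdef_conjT {N Q : Mat n} (hN : N.PosDef) (hQ : IsUnit Q.det) :
    (Qᵀ * N * Q).PosDef := by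
  have hQu : IsUnit Q := (Matrix.isUnit_iff_isUnit_det Q).2 hQ
  refine Matrix.PosDef.of_dotProduct_mulVec_pos ?_ fun x hx => ?_
  · have hNsym : Nᵀ = N := by rw [← Matrix.conjTranspose_eq_transpose_of_trivial, hN.1.eq]
    unfold Matrix.IsHermitian
    simp only [Matrix.conjTranspose_eq_transpose_of_trivial, Matrix.transpose_mul,
      Matrix.transpose_transpose, hNsym, Matrix.mul_assoc]
  · have hinj : Function.Injective (Q.mulVec) := (Matrix.mulVec_injective_iff_isUnit).2 hQu
    have hQx : Q *ᵥ x ≠ 0 := by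
      intro h0
      apply hx
      apply hinj
      simpa [Matrix.mulVec_zero] using h0
    have hpos := hN.dotProduct_mulVec_pos hQx
    have e : star x ⬝ᵥ ((Qᵀ * N * Q) *ᵥ x) = star (Q *ᵥ x) ⬝ᵥ (N *ᵥ (Q *ᵥ x)) := by
      simp only [star_trivial]
      rw [← Matrix.mulVec_mulVec, ← Matrix.mulVec_mulVec, Matrix.dotProduct_mulVec,
        ← Matrix.mulVec_transpose, Matrix.transpose_transpose]
    rw [e]
    exact hpos

lemma sum_bound {n : ℕ} (μ : Fin n → ℝ) (aa : Fin n → Fin n → ℝ) (l : ℝ) (hl : 0 < l)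
    (hμpos : ∀ i, 0 < μ i) (hsym : ∀ p q : Fin n, aa p q = aa q p)
    (hrow : ∀ i, ∑ j, (1 + μ j) * (aa i j)^2 ≤ 2 * l * aa i i)
    (hcm : ∀ i, max 1 (μ i) * aa i i ≤ l) :
    ∑ i, ∑ j, ((1 - μ i) * (1 - μ j)) * (aa i j)^2
      ≤ ∑ i, (1 - μ i)^2 / (1 + μ i) * (2 * l * (l / max 1 (μ i))) := by
  have ht1 : ∀ i, (0:ℝ) < 1 + μ i := fun i => by linarith [hμpos i]
  have hmx : ∀ i, (0:ℝ) < max 1 (μ i) := fun i => lt_of_lt_of_le one_pos (le_max_left _ _)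
  have step1 : ∀ i j : Fin n, ((1 - μ i) * (1 - μ j)) * (aa i j)^2
      ≤ ((1-μ i)^2*((1+μ j)/(1+μ i)) * (aa i j)^2
          + (1-μ j)^2*((1+μ i)/(1+μ j)) * (aa j i)^2)/2 := by
    intro i j
    rw [hsym j i]
    have base := amgm (x := 1 - μ i) (y := 1 - μ j) (ht1 i) (ht1 j)
    have h2 := mul_le_mul_of_nonneg_right base (sq_nonneg (aa i j))
    refine le_trans h2 (le_of_eq ?_)
    ring
  calc ∑ i, ∑ j, ((1 - μ i) * (1 - μ j)) * (aa i j)^2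
      ≤ ∑ i, ∑ j, ((1-μ i)^2*((1+μ j)/(1+μ i)) * (aa i j)^2
          + (1-μ j)^2*((1+μ i)/(1+μ j)) * (aa j i)^2)/2 :=
        Finset.sum_le_sum fun i _ => Finset.sum_le_sum fun j _ => step1 i j
  _ = ∑ i, ∑ j, (1-μ i)^2*((1+μ j)/(1+μ i)) * (aa i j)^2 := by
        simp only [Finset.sum_add_distrib, ← Finset.sum_div]
        rw [show ∑ i, ∑ j, (1-μ j)^2*((1+μ i)/(1+μ j)) * (aa j i)^2
            = ∑ i, ∑ j, (1-μ i)^2*((1+μ j)/(1+μ i)) * (aa i j)^2 from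
          Finset.sum_comm (f := fun i j => (1-μ j)^2*((1+μ i)/(1+μ j)) * (aa j i)^2)]
        ring
  _ = ∑ i, (1-μ i)^2/(1+μ i) * ∑ j, (1 + μ j) * (aa i j)^2 := by
        apply Finset.sum_congr rfl
        intro i _
        rw [Finset.mul_sum]
        apply Finset.sum_congr rfl
        intro j _
        ring
  _ ≤ ∑ i, (1 - μ i)^2 / (1 + μ i) * (2 * l * (l / max 1 (μ i))) := by
        apply Finset.sum_le_sum
        intro i _
        have hfac : (0:ℝ) ≤ (1 - μ i)^2/(1+μ i) := div_nonneg (sq_nonneg _) (ht1 i).le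
        refine mul_le_mul_of_nonneg_left ?_ hfac
        refine le_trans (hrow i) ?_
        refine mul_le_mul_of_nonneg_left ?_ (by linarith)
        rw [le_div_iff₀ (hmx i), mul_comm]
        exact hcm i

open scoped MatrixOrder in
lemma midpoint_logdet {M N : Mat n} (hM : M.PosDef) (hN : N.PosDef)
    {l : ℝ} (hl : 0 < l)
    (hMl : (l • (1 : Mat n) - M).PosSemidef) (hNl : (l • (1 : Mat n) - N).PosSemidef) :
    1/2 * Real.log M.det + 1/2 * Real.log N.det
      + (1/(8*l^2)) * Matrix.trace ((M - N) * (M - N))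
      ≤ Real.log (((1:ℝ)/2) • (M + N)).det := by
  classical
  have hdetM : 0 < M.det := hM.det_pos
  have hMsym : Mᵀ = M := by
    rw [← Matrix.conjTranspose_eq_transpose_of_trivial, hM.1.eq]
  -- a square root of M
  obtain ⟨S, hSsym, hSS, hdetS⟩ : ∃ S : Mat n, Sᵀ = S ∧ S * S = M ∧ IsUnit S.det := by
    refine ⟨CFC.sqrt M, ?_, CFC.sqrt_mul_sqrt_self M (Matrix.nonneg_iff_posSemidef.mpr hM.posSemidef), ?_⟩
    · rw [← Matrix.conjTranspose_eq_transpose_of_trivial,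
        (Matrix.nonneg_iff_posSemidef.mp (CFC.sqrt_nonneg M)).1.eq]
    · have h2 : (CFC.sqrt M).det * (CFC.sqrt M).det = M.det := by
        rw [← Matrix.det_mul, CFC.sqrt_mul_sqrt_self M (Matrix.nonneg_iff_posSemidef.mpr hM.posSemidef)]
      rw [isUnit_iff_ne_zero]
      intro h0
      rw [h0, mul_zero] at h2
      exact absurd h2.symm (ne_of_gt hdetM)
  have hSinv : S * S⁻¹ = 1 := Matrix.mul_nonsing_inv _ hdetS
  have hSinv' : S⁻¹ * S = 1 := Matrix.nonsing_inv_mul _ hdetS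
  have hSinvsym : (S⁻¹)ᵀ = S⁻¹ := by
    rw [Matrix.transpose_nonsing_inv, hSsym]
  have hdetSinv : IsUnit (S⁻¹).det := S.isUnit_nonsing_inv_det hdetS
  -- C and its spectral decomposition
  have hCpd : (S⁻¹ * N * S⁻¹).PosDef := by
    have := posdef_conjT hN hdetSinv
    rwa [hSinvsym] at this
  have hSCS : S * (S⁻¹ * N * S⁻¹) * S = N := by
    calc S * (S⁻¹ * N * S⁻¹) * S = (S * S⁻¹) * N * (S⁻¹ * S) := by simp only [Matrix.mul_sub, Matrix.sub_mul, Matrix.mul_add, Matrix.add_mul, Matrix.mul_one, Matrix.one_mul, Matrix.mul_assoc]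
    _ = N := by rw [hSinv, hSinv', one_mul, mul_one]
  obtain ⟨V, hVVt, hVtV, μ, hμpos, hspec⟩ :
      ∃ V : Mat n, V * Vᵀ = 1 ∧ Vᵀ * V = 1 ∧ ∃ μ : Fin n → ℝ,
        (∀ i, 0 < μ i) ∧ S⁻¹ * N * S⁻¹ = V * diagonal μ * Vᵀ := by
    refine ⟨(hCpd.1.eigenvectorUnitary : Mat n), ?_, ?_, hCpd.1.eigenvalues,
      fun i => hCpd.eigenvalues_pos i, ?_⟩
    · have := (Matrix.mem_unitaryGroup_iff).mp hCpd.1.eigenvectorUnitary.2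
      simpa [Matrix.star_eq_conjTranspose,
        Matrix.conjTranspose_eq_transpose_of_trivial] using this
    · have := (Matrix.mem_unitaryGroup_iff').mp hCpd.1.eigenvectorUnitary.2
      simpa [Matrix.star_eq_conjTranspose,
        Matrix.conjTranspose_eq_transpose_of_trivial] using this
    · have := hCpd.1.spectral_theorem
      simpa [Matrix.star_eq_conjTranspose, Matrix.conjTranspose_eq_transpose_of_trivial,
        Function.comp] using this
  set C : Mat n := S⁻¹ * N * S⁻¹ with hCdef
  set D : Mat n := diagonal μ with hDdef
  set a : Mat n := Vᵀ * M * V with hadef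
  set s : Mat n := Vᵀ * S * V with hsdef
  set g : Mat n := Vᵀ * N * V with hgdef
  have hconjsym : ∀ X : Mat n, Xᵀ = X → (Vᵀ * X * V)ᵀ = Vᵀ * X * V := by
    intro X hX
    rw [Matrix.transpose_mul, Matrix.transpose_mul, Matrix.transpose_transpose, hX,
      ← Matrix.mul_assoc]
  have hasym : aᵀ = a := by rw [hadef]; exact hconjsym M hMsym
  have hssym : sᵀ = s := by rw [hsdef]; exact hconjsym S hSsym
  have haij : ∀ p q : Fin n, a p q = a q p := by
    intro p q
    have h := congrFun (congrFun hasym q) p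
    rwa [Matrix.transpose_apply] at h
  have hssa : s * s = a := by
    rw [hsdef, hadef]
    calc (Vᵀ*S*V) * (Vᵀ*S*V) = Vᵀ*S*(V*Vᵀ)*S*V := by simp only [Matrix.mul_sub, Matrix.sub_mul, Matrix.mul_add, Matrix.add_mul, Matrix.mul_one, Matrix.one_mul, Matrix.mul_assoc]
    _ = Vᵀ*(S*S)*V := by rw [hVVt]; noncomm_ring
    _ = Vᵀ*M*V := by rw [hSS]
  have hsDs : s * D * s = g := by
    rw [hsdef, hgdef, hDdef]
    calc (Vᵀ*S*V) * diagonal μ * (Vᵀ*S*V) = Vᵀ*(S*(V*diagonal μ*Vᵀ)*S)*V := by simp only [Matrix.mul_sub, Matrix.sub_mul, Matrix.mul_add, Matrix.add_mul, Matrix.mul_one, Matrix.one_mul, Matrix.mul_assoc]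
    _ = Vᵀ*N*V := by rw [← hspec, hSCS]
  -- PSD facts after conjugation
  have hconjpsd : ∀ X : Mat n, X.PosSemidef → (Vᵀ * X * V).PosSemidef := by
    intro X hX
    have := hX.conjTranspose_mul_mul_same V
    rwa [Matrix.conjTranspose_eq_transpose_of_trivial] at this
  have hsmul1 : ∀ Z : Mat n, Vᵀ * (l • (1:Mat n) - Z) * V = l • (1:Mat n) - Vᵀ*Z*V := by
    intro Z
    rw [Matrix.mul_sub, Matrix.sub_mul]
    congr 1
    rw [Matrix.mul_smul, Matrix.mul_one, Matrix.smul_mul, hVtV]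
  have hale : (l • (1:Mat n) - a).PosSemidef := by
    have h := hconjpsd _ hMl
    rwa [hsmul1 M, ← hadef] at h
  have hgle : (l • (1:Mat n) - g).PosSemidef := by
    have h := hconjpsd _ hNl
    rwa [hsmul1 N, ← hgdef] at h
  have hconjpsd_s : ∀ X : Mat n, X.PosSemidef → (s * X * s).PosSemidef := by
    intro X hX
    have := hX.conjTranspose_mul_mul_same s
    rwa [Matrix.conjTranspose_eq_transpose_of_trivial, hssym] at this
  have hp1 : (l • a - a * a).PosSemidef := by
    have h1 : s * (l • (1:Mat n) - a) * s = l • a - a * a := by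
      rw [Matrix.mul_sub, Matrix.sub_mul]
      congr 1
      · rw [Matrix.mul_smul, Matrix.mul_one, Matrix.smul_mul, hssa]
      · calc s * a * s = s*(s*s)*s := by rw [hssa]
        _ = (s*s)*(s*s) := by simp only [Matrix.mul_sub, Matrix.sub_mul, Matrix.mul_add, Matrix.add_mul, Matrix.mul_one, Matrix.one_mul, Matrix.mul_assoc]
        _ = a * a := by rw [hssa]
    have h := hconjpsd_s _ hale
    rwa [h1] at h
  have hp2 : (l • a - a * D * a).PosSemidef := by
    have h1 : s * (l • (1:Mat n) - g) * s = l • a - a * D * a := by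
      rw [Matrix.mul_sub, Matrix.sub_mul]
      congr 1
      · rw [Matrix.mul_smul, Matrix.mul_one, Matrix.smul_mul, hssa]
      · rw [← hsDs]
        calc s*(s*D*s)*s = (s*s)*D*(s*s) := by simp only [Matrix.mul_sub, Matrix.sub_mul, Matrix.mul_add, Matrix.add_mul, Matrix.mul_one, Matrix.one_mul, Matrix.mul_assoc]
        _ = a*D*a := by rw [hssa]
    have h := hconjpsd_s _ hgle
    rwa [h1] at h
  -- μ i * a i i ≤ l
  have hmuA : ∀ i, μ i * a i i ≤ l := by
    intro i
    set R : Mat n := diagonal (fun i => Real.sqrt (μ i)) with hRdef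
    have hRsym : Rᵀ = R := Matrix.diagonal_transpose _
    have hRR : R * R = D := by
      rw [hRdef, hDdef, Matrix.diagonal_mul_diagonal]
      exact congrArg diagonal (funext fun k => Real.mul_self_sqrt (hμpos k).le)
    have hY : (l • (1:Mat n) - (s*R) * (s*R)ᵀ).PosSemidef := by
      have he : (s*R) * (s*R)ᵀ = g := by
        rw [Matrix.transpose_mul, hRsym, hssym]
        calc s*R*(R*s) = s*(R*R)*s := by simp only [Matrix.mul_sub, Matrix.sub_mul, Matrix.mul_add, Matrix.add_mul, Matrix.mul_one, Matrix.one_mul, Matrix.mul_assoc]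
        _ = g := by rw [hRR, hsDs]
      rwa [he]
    have hYt := transfer hl.le hY
    have he : (s*R)ᵀ * (s*R) = R * a * R := by
      rw [Matrix.transpose_mul, hRsym, hssym]
      calc R*s*(s*R) = R*(s*s)*R := by simp only [Matrix.mul_sub, Matrix.sub_mul, Matrix.mul_add, Matrix.add_mul, Matrix.mul_one, Matrix.one_mul, Matrix.mul_assoc]
      _ = R*a*R := by rw [hssa]
    rw [he] at hYt
    have hd := diag_le hYt i
    have he2 : (R * a * R) i i = μ i * a i i := by
      rw [hRdef, Matrix.mul_diagonal, Matrix.diagonal_mul,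
        show Real.sqrt (μ i) * a i i * Real.sqrt (μ i)
          = Real.sqrt (μ i) * Real.sqrt (μ i) * a i i from by ring,
        Real.mul_self_sqrt (hμpos i).le]
    rwa [he2] at hd
  have haii_le : ∀ i, a i i ≤ l := fun i => diag_le hale i
  have hapsd : a.PosSemidef := by
    have := hconjpsd M hM.posSemidef
    rwa [← hadef] at this
  have haii_nonneg : ∀ i, 0 ≤ a i i := fun i => psd_diag hapsd i
  have hcmax : ∀ i, max 1 (μ i) * a i i ≤ l := by
    intro i
    rcases le_total (μ i) 1 with h | h
    · rw [max_eq_left h, one_mul]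
      exact haii_le i
    · rw [max_eq_right h]
      exact hmuA i
  -- trace identity
  have hWtW : (S*V)ᵀ*(S*V) = a := by
    rw [Matrix.transpose_mul, hSsym, hadef]
    calc Vᵀ*S*(S*V) = Vᵀ*(S*S)*V := by simp only [Matrix.mul_sub, Matrix.sub_mul, Matrix.mul_add, Matrix.add_mul, Matrix.mul_one, Matrix.one_mul, Matrix.mul_assoc]
    _ = Vᵀ*M*V := by rw [hSS]
  have hWWt : (S*V) * (S*V)ᵀ = M := by
    rw [Matrix.transpose_mul, hSsym]
    calc S*V*(Vᵀ*S) = S*(V*Vᵀ)*S := by simp only [Matrix.mul_sub, Matrix.sub_mul, Matrix.mul_add, Matrix.add_mul, Matrix.mul_one, Matrix.one_mul, Matrix.mul_assoc]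
    _ = M := by rw [hVVt, Matrix.mul_one, hSS]
  have hdetW : (S*V).det * (S*V).det = M.det := by
    calc (S*V).det * (S*V).det = (S*V).det * ((S*V)ᵀ).det := by rw [Matrix.det_transpose]
    _ = ((S*V)*(S*V)ᵀ).det := (Matrix.det_mul _ _).symm
    _ = M.det := by rw [hWWt]
  have hMN : M - N = (S*V) * (diagonal (fun i => 1 - μ i)) * (S*V)ᵀ := by
    have h1 : diagonal (fun i => 1 - μ i) = 1 - D := by
      rw [hDdef]
      ext i j
      rcases eq_or_ne i j with rfl | hij
      · simp
      · simp [Matrix.diagonal_apply_ne _ hij, Matrix.one_apply_ne hij]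
    rw [h1, Matrix.transpose_mul, hSsym]
    symm
    calc (S*V)*((1:Mat n)-D)*(Vᵀ*S) = S*(V*Vᵀ)*S - S*(V*D*Vᵀ)*S := by simp only [Matrix.mul_sub, Matrix.sub_mul, Matrix.mul_add, Matrix.add_mul, Matrix.mul_one, Matrix.one_mul, Matrix.mul_assoc]
    _ = M - N := by
        rw [hVVt, Matrix.mul_one, hSS, hDdef, ← hspec, hSCS]
  have htrace : Matrix.trace ((M-N)*(M-N))
      = ∑ i, ∑ j, ((1 - μ i) * (1 - μ j)) * (a i j)^2 := by
    have e0 : (M-N)*(M-N) = (S*V) * (diagonal (fun i => 1 - μ i) * a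
        * diagonal (fun i => 1 - μ i)) * (S*V)ᵀ := by
      rw [hMN]
      calc (S*V) * diagonal (fun i => 1 - μ i) * (S*V)ᵀ
            * ((S*V) * diagonal (fun i => 1 - μ i) * (S*V)ᵀ)
          = (S*V) * (diagonal (fun i => 1 - μ i) * ((S*V)ᵀ*(S*V))
              * diagonal (fun i => 1 - μ i)) * (S*V)ᵀ := by simp only [Matrix.mul_sub, Matrix.sub_mul, Matrix.mul_add, Matrix.add_mul, Matrix.mul_one, Matrix.one_mul, Matrix.mul_assoc]
      _ = _ := by rw [hWtW]
    rw [e0, Matrix.trace_mul_cycle, hWtW]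
    have e1 : a * (diagonal (fun i => 1 - μ i) * a * diagonal (fun i => 1 - μ i))
        = (a * diagonal (fun i => 1 - μ i)) * (a * diagonal (fun i => 1 - μ i)) := by
      noncomm_ring
    rw [e1]
    simp only [Matrix.trace, Matrix.diag_apply]
    apply Finset.sum_congr rfl
    intro i _
    rw [Matrix.mul_apply]
    apply Finset.sum_congr rfl
    intro j _
    rw [Matrix.mul_diagonal, Matrix.mul_diagonal, haij j i]
    ring
  -- row bound
  have hrow : ∀ i, ∑ j, (1 + μ j) * (a i j)^2 ≤ 2 * l * a i i := by
    intro i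
    have e2 : (a*D*a) i i = ∑ j, (a i j * μ j) * a j i := by
      rw [hDdef, Matrix.mul_apply]
      apply Finset.sum_congr rfl
      intro j _
      rw [Matrix.mul_diagonal]
    have e3 : (a*a) i i = ∑ j, a i j * a j i := Matrix.mul_apply
    have e1 : ∑ j, (1 + μ j) * (a i j)^2 = (a*a) i i + (a*D*a) i i := by
      rw [e2, e3, ← Finset.sum_add_distrib]
      apply Finset.sum_congr rfl
      intro j _
      rw [haij j i]
      ring
    have d1 := psd_diag hp1 i
    have d2 := psd_diag hp2 i
    simp only [Matrix.sub_apply, Matrix.smul_apply, smul_eq_mul] at d1 d2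
    rw [e1]
    linarith
  have ht1 : ∀ i, (0:ℝ) < 1 + μ i := fun i => by linarith [hμpos i]
  have hmx : ∀ i, (0:ℝ) < max 1 (μ i) := fun i => lt_of_lt_of_le one_pos (le_max_left _ _)
  have ht1 : ∀ i, (0:ℝ) < 1 + μ i := fun i => by linarith [hμpos i]
  have hmx : ∀ i, (0:ℝ) < max 1 (μ i) := fun i => lt_of_lt_of_le one_pos (le_max_left _ _)
  have hTb : Matrix.trace ((M-N)*(M-N))
      ≤ ∑ i, (1 - μ i)^2 / (1 + μ i) * (2 * l * (l / max 1 (μ i))) := by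
    rw [htrace]
    exact sum_bound μ (fun p q => a p q) l hl hμpos haij hrow hcmax
  have hfinal1 : (1/(8*l^2)) * Matrix.trace ((M-N)*(M-N))
      ≤ ∑ i, (1 - μ i)^2 / (4*(1+μ i)*max 1 (μ i)) := by
    calc (1/(8*l^2)) * Matrix.trace ((M-N)*(M-N))
        ≤ (1/(8*l^2)) * ∑ i, (1 - μ i)^2 / (1 + μ i) * (2 * l * (l / max 1 (μ i))) :=
          mul_le_mul_of_nonneg_left hTb (by positivity)
    _ = ∑ i, (1 - μ i)^2 / (4*(1+μ i)*max 1 (μ i)) := by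
        rw [Finset.mul_sum]
        apply Finset.sum_congr rfl
        intro i _
        have h1 : (1+μ i) ≠ 0 := ne_of_gt (ht1 i)
        have h2 : max 1 (μ i) ≠ 0 := ne_of_gt (hmx i)
        have h3 : l ≠ 0 := ne_of_gt hl
        field_simp
        ring
  have hfinal2 : ∑ i, (1 - μ i)^2 / (4*(1+μ i)*max 1 (μ i))
      ≤ ∑ i, (Real.log ((1+μ i)/2) - 1/2 * Real.log (μ i)) :=
    Finset.sum_le_sum fun i _ => scalar_ineq (hμpos i)
  -- determinants
  have hprodpos1 : ∀ i : Fin n, ((1:ℝ)+μ i)/2 ≠ 0 :=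
    fun i => ne_of_gt (by linarith [hμpos i] : (0:ℝ) < (1+μ i)/2)
  have hdetmid : Real.log (((1:ℝ)/2) • (M + N)).det
      = Real.log M.det + ∑ i, Real.log ((1+μ i)/2) := by
    have h1 : diagonal (fun i => ((1:ℝ)+μ i)/2) = ((1:ℝ)/2) • ((1:Mat n) + D) := by
      rw [hDdef]
      ext i j
      rcases eq_or_ne i j with rfl | hij
      · simp [Matrix.add_apply]
        ring
      · simp [Matrix.diagonal_apply_ne _ hij, Matrix.one_apply_ne hij, Matrix.add_apply]
    have hmid : ((1:ℝ)/2) • (M + N) = (S*V) * diagonal (fun i => ((1:ℝ)+μ i)/2) * (S*V)ᵀ := by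
      rw [h1, Matrix.mul_smul, Matrix.smul_mul]
      congr 1
      rw [Matrix.transpose_mul, hSsym]
      symm
      calc (S*V)*((1:Mat n)+D)*(Vᵀ*S) = S*(V*Vᵀ)*S + S*(V*D*Vᵀ)*S := by simp only [Matrix.mul_sub, Matrix.sub_mul, Matrix.mul_add, Matrix.add_mul, Matrix.mul_one, Matrix.one_mul, Matrix.mul_assoc]
      _ = M + N := by rw [hVVt, Matrix.mul_one, hSS, ← hspec, hSCS]
    rw [hmid, Matrix.det_mul, Matrix.det_mul, Matrix.det_transpose, Matrix.det_diagonal]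
    rw [show (S*V).det * (∏ i, (((1:ℝ)+μ i)/2)) * (S*V).det
        = M.det * ∏ i, (((1:ℝ)+μ i)/2) from by rw [← hdetW]; ring]
    rw [Real.log_mul (ne_of_gt hdetM) (Finset.prod_ne_zero_iff.2 fun i _ => hprodpos1 i),
      Real.log_prod (fun i _ => hprodpos1 i)]
  have hdetN : Real.log N.det = Real.log M.det + ∑ i, Real.log (μ i) := by
    have h1 : (S*V) * D * (S*V)ᵀ = N := by
      rw [Matrix.transpose_mul, hSsym]
      calc (S*V)*D*(Vᵀ*S) = S*(V*D*Vᵀ)*S := by simp only [Matrix.mul_sub, Matrix.sub_mul, Matrix.mul_add, Matrix.add_mul, Matrix.mul_one, Matrix.one_mul, Matrix.mul_assoc]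
      _ = N := by rw [← hspec, hSCS]
    rw [← h1, Matrix.det_mul, Matrix.det_mul, Matrix.det_transpose, hDdef,
      Matrix.det_diagonal]
    rw [show (S*V).det * (∏ i, μ i) * (S*V).det = M.det * ∏ i, μ i from by
      rw [← hdetW]; ring]
    rw [Real.log_mul (ne_of_gt hdetM)
        (Finset.prod_ne_zero_iff.2 fun i _ => ne_of_gt (hμpos i)),
      Real.log_prod (fun i _ => ne_of_gt (hμpos i))]
  rw [hdetmid, hdetN]
  have hsplit : ∑ i, (Real.log ((1+μ i)/2) - 1/2 * Real.log (μ i))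
      = (∑ i, Real.log ((1+μ i)/2)) - 1/2 * ∑ i, Real.log (μ i) := by
    rw [Finset.sum_sub_distrib, Finset.mul_sum]
  linarith [hfinal1.trans hfinal2]

end SLD

open SLD

theorem stmt0 {n : ℕ} (A B : Matrix (Fin n) (Fin n) ℝ)
    (hA : A.PosDef) (hB : B.PosDef)
    (lamA lamB : ℝ)
    (hlA : IsGreatest (Set.range hA.1.eigenvalues) lamA)
    (hlB : IsGreatest (Set.range hB.1.eigenvalues) lamB)
    (t : ℝ) (ht : t ∈ Set.Icc (0:ℝ) 1) :
    (1 - t) * Real.log A.det + t * Real.log B.det +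
      (1/2) * t * (1 - t) * (1 / max (lamA^2) (lamB^2)) *
        Matrix.trace ((A - B)ᵀ * (A - B))
      ≤ Real.log ((1 - t) • A + t • B).det := by
  obtain ⟨iA, hiA⟩ := hlA.1
  obtain ⟨iB, hiB⟩ := hlB.1
  have hlamA : 0 < lamA := hiA ▸ hA.eigenvalues_pos iA
  have hlamB : 0 < lamB := hiB ▸ hB.eigenvalues_pos iB
  set l : ℝ := max lamA lamB with hldef
  have hl : 0 < l := lt_max_of_lt_left hlamA
  have hl0 : l ≠ 0 := ne_of_gt hl
  have hmax : max (lamA^2) (lamB^2) = l^2 := by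
    rcases le_total lamA lamB with h | h
    · rw [max_eq_right (pow_le_pow_left₀ hlamA.le h 2), hldef, max_eq_right h]
    · rw [max_eq_left (pow_le_pow_left₀ hlamB.le h 2), hldef, max_eq_left h]
  have hAl : (l • (1 : Mat n) - A).PosSemidef :=
    eig_bound hA.1 (fun i => le_trans (hlA.2 (Set.mem_range_self i)) (le_max_left _ _))
  have hBl : (l • (1 : Mat n) - B).PosSemidef :=
    eig_bound hB.1 (fun i => le_trans (hlB.2 (Set.mem_range_self i)) (le_max_right _ _))
  have hMpos : ∀ u : ℝ, u ∈ Set.Icc (0:ℝ) 1 → ((1-u) • A + u • B).PosDef := by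
    intro u hu
    rcases eq_or_lt_of_le hu.2 with h1 | h1
    · rw [h1]
      simpa using hB
    · exact ((posdef_smul hA (by linarith)).add_posSemidef (psd_smul hB.posSemidef hu.1))
  have hMle : ∀ u : ℝ, u ∈ Set.Icc (0:ℝ) 1 →
      (l • (1 : Mat n) - ((1-u) • A + u • B)).PosSemidef := by
    intro u hu
    have e : l • (1 : Mat n) - ((1-u) • A + u • B)
        = (1-u) • (l • (1 : Mat n) - A) + u • (l • (1 : Mat n) - B) := by
      ext i j
      simp only [Matrix.sub_apply, Matrix.add_apply, Matrix.smul_apply, smul_eq_mul]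
      ring
    rw [e]
    exact (psd_smul hAl (by linarith [hu.2])).add (psd_smul hBl hu.1)
  set T : ℝ := Matrix.trace ((A - B) * (A - B)) with hTdef
  set c : ℝ := T / l^2 with hcdef
  set F : ℝ → ℝ := fun u => Real.log ((1-u) • A + u • B).det
      - ((1-u) * Real.log A.det + u * Real.log B.det + c/2*(u*(1-u))) with hFdef
  have hF0 : F 0 = 0 := by norm_num [hFdef]
  have hF1 : F 1 = 0 := by norm_num [hFdef]
  have hmid : ∀ s u : ℝ, s ∈ Set.Icc (0:ℝ) 1 → u ∈ Set.Icc (0:ℝ) 1 →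
      F s / 2 + F u / 2 ≤ F ((s+u)/2) := by
    intro s u hs hu
    have key := midpoint_logdet (hMpos s hs) (hMpos u hu) hl (hMle s hs) (hMle u hu)
    have e1 : ((1:ℝ)/2) • (((1-s) • A + s • B) + ((1-u) • A + u • B))
        = (1 - (s+u)/2) • A + ((s+u)/2) • B := by
      ext i j
      simp only [Matrix.add_apply, Matrix.smul_apply, smul_eq_mul]
      ring
    have e2 : ((1-s) • A + s • B) - ((1-u) • A + u • B) = (u - s) • (A - B) := by
      ext i j
      simp only [Matrix.add_apply, Matrix.sub_apply, Matrix.smul_apply, smul_eq_mul]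
      ring
    rw [e1, e2] at key
    have e3 : Matrix.trace (((u-s) • (A-B)) * ((u-s) • (A-B))) = (u-s)^2 * T := by
      rw [Matrix.smul_mul, Matrix.mul_smul, smul_smul, Matrix.trace_smul, hTdef]
      simp only [smul_eq_mul]
      ring
    rw [e3] at key
    have halg : (1/(8*l^2)) * ((u-s)^2 * T)
        = c/2*(((s+u)/2)*(1-(s+u)/2)) - (c/2*(s*(1-s)))/2 - (c/2*(u*(1-u)))/2 := by
      rw [hcdef]
      field_simp
      ring
    simp only [hFdef]
    linarith [key, halg]
  have hdy : ∀ k : ℕ, ∀ j : ℕ, j ≤ 2^k → 0 ≤ F ((j : ℝ) / 2^k) := by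
    intro k
    induction k with
    | zero =>
      intro j hj
      interval_cases j
      · norm_num [hF0]
      · norm_num [hF1]
    | succ k ih =>
      intro j hj
      have h2k : (0:ℝ) < 2^k := by positivity
      have hmem : ∀ jj : ℕ, jj ≤ 2^k → ((jj:ℝ))/2^k ∈ Set.Icc (0:ℝ) 1 := by
        intro jj hjj
        constructor
        · positivity
        · rw [div_le_one h2k]
          calc ((jj:ℝ)) ≤ ((2^k : ℕ) : ℝ) := by exact_mod_cast hjj
          _ = 2^k := by push_cast; ring
      rcases Nat.even_or_odd j with ⟨m, hm⟩ | ⟨m, hm⟩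
      · have hmle : m ≤ 2^k := by
          have := Nat.pow_succ 2 k
          omega
        have huj : ((j:ℝ)) / 2^(k+1) = (m : ℝ) / 2^k := by
          subst hm
          push_cast
          field_simp
          ring
        rw [huj]
        exact ih m hmle
      · have hm1 : m + 1 ≤ 2^k := by
          have := Nat.pow_succ 2 k
          omega
        have h1 := ih m (by omega)
        have h2 := ih (m+1) hm1
        push_cast at h2
        have hmid2 := hmid _ _ (hmem m (by omega)) (hmem (m+1) hm1)
        have e : ((j:ℝ))/2^(k+1) = ((m:ℝ)/2^k + (((m+1:ℕ)):ℝ)/2^k)/2 := by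
          subst hm
          push_cast
          field_simp
          ring
        rw [e]
        push_cast at hmid2 ⊢
        linarith
  have hposF : ∀ u ∈ Set.Icc (0:ℝ) 1, 0 ≤ F u := by
    intro u hu
    set seq : ℕ → ℝ := fun k => ((⌊u * 2^k⌋₊ : ℕ) : ℝ)/2^k with hseq
    have hseqmem : ∀ k, 0 ≤ F (seq k) := by
      intro k
      apply hdy k
      have h2k : (0:ℝ) < 2^k := by positivity
      have hle : u * 2^k ≤ ((2^k : ℕ) : ℝ) := by
        push_cast
        nlinarith [hu.2, h2k]
      calc ⌊u * 2^k⌋₊ ≤ ⌊((2^k : ℕ) : ℝ)⌋₊ := Nat.floor_le_floor hle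
      _ = 2^k := Nat.floor_natCast _
    have hconv : Filter.Tendsto seq Filter.atTop (nhds u) := by
      have h2k : ∀ k : ℕ, (0:ℝ) < 2^k := fun k => by positivity
      have hlow : ∀ k, u - (1/2:ℝ)^k ≤ seq k := by
        intro k
        have h1 : u * 2^k < ⌊u * 2^k⌋₊ + 1 := Nat.lt_floor_add_one _
        have h2 : u ≤ (((⌊u * 2^k⌋₊ : ℕ) : ℝ) + 1)/2^k := by
          rw [le_div_iff₀ (h2k k)]
          linarith
        have h3 : (((⌊u * 2^k⌋₊ : ℕ) : ℝ) + 1)/2^k = seq k + (1/2:ℝ)^k := by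
          simp only [hseq]
          rw [add_div]
          congr 1
          rw [_root_.one_div_pow]
        rw [h3] at h2
        linarith
      have hhigh : ∀ k, seq k ≤ u := by
        intro k
        simp only [hseq]
        rw [div_le_iff₀ (h2k k)]
        exact Nat.floor_le (mul_nonneg hu.1 (by positivity))
      have htend : Filter.Tendsto (fun k : ℕ => u - (1/2:ℝ)^k) Filter.atTop (nhds u) := by
        have hh := tendsto_pow_atTop_nhds_zero_of_lt_one
          (by norm_num : (0:ℝ) ≤ 1/2) (by norm_num : (1/2:ℝ) < 1)
        simpa using Filter.Tendsto.const_sub u hh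
      exact tendsto_of_tendsto_of_tendsto_of_le_of_le htend tendsto_const_nhds hlow hhigh
    have hcont : ContinuousAt F u := by
      have hdet : ((1-u) • A + u • B).det ≠ 0 := (hMpos u hu).det_pos.ne'
      have hcm : Continuous fun v : ℝ => ((1-v) • A + v • B) :=
        ((continuous_const.sub continuous_id).smul continuous_const).add
          (continuous_id.smul continuous_const)
      have hlogc : ContinuousAt (fun v : ℝ => Real.log ((1-v) • A + v • B).det) u :=
        hcm.matrix_det.continuousAt.log hdet
      rw [hFdef]
      apply ContinuousAt.sub hlogc
      fun_prop
    exact ge_of_tendsto (hcont.tendsto.comp hconv) (Filter.Eventually.of_forall hseqmem)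
  have hFt := hposF t ht
  have hAB : (A - B)ᵀ = A - B := by
    rw [Matrix.transpose_sub, ← Matrix.conjTranspose_eq_transpose_of_trivial A, hA.1.eq,
      ← Matrix.conjTranspose_eq_transpose_of_trivial B, hB.1.eq]
  rw [hAB, hmax]
  simp only [hFdef] at hFt
  have hfin : c/2*(t*(1-t)) = 1/2*t*(1-t)*(1/l^2)*(Matrix.trace ((A-B)*(A-B))) := by
    rw [hcdef, hTdef]
    field_simp
  linarith
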